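/- Let B be a bicategory, Γ = (f,g,η,ρ) a wide right Morita context from B to A, Λ = (p,q,γ,μ) from C to B, and Ω = (u,v,θ,σ) from D to C. Then the pair of associator 2-cells (α_{f,p,u}, α⁻¹_{v,q,g}) defines an isomorphism of wide right Morita contexts (ΓΛ)Ω ≅ Γ(ΛΩ) from D to A; in particular the compatibility condition η ∗ (γ ∗ θ) ∘ (α_{f,p,u} ⊗ α⁻¹_{v,q,g}) = (η ∗ γ) ∗ θ holds. -/
import Mathlib


/-!
STATEMENT 7: The pair of associator 2-cells (α_{f,p,u}, α⁻¹_{v,q,g}) is an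
isomorphism of wide right Morita contexts (ΓΛ)Ω ≅ Γ(ΛΩ); in particular the
compatibility conditions of a morphism of contexts hold (the 2-cells being
invertible, this is an isomorphism).
-/

open CategoryTheory Bicategory

/-- The two compatibility diagrams of a wide right Morita context (f, g, η, ρ). -/
def IsWRMC {B : Type*} [Bicategory B] {a b : B} (f : a ⟶ b) (g : b ⟶ a)
    (η : f ≫ g ⟶ 𝟙 a) (ρ : g ≫ f ⟶ 𝟙 b) : Prop :=
  ((ρ ▷ g) ≫ (λ_ g).hom = (α_ g f g).hom ≫ (g ◁ η) ≫ (ρ_ g).hom) ∧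
  ((α_ f g f).hom ≫ (f ◁ ρ) ≫ (ρ_ f).hom = (η ▷ f) ≫ (λ_ f).hom)

/-- Horizontal composite of 2-cells. -/
def hcomp {B : Type*} [Bicategory B] {a b c : B} {f f' : a ⟶ b} {g g' : b ⟶ c}
    (u : f ⟶ f') (v : g ⟶ g') : f ≫ g ⟶ f' ≫ g' :=
  (u ▷ g) ≫ (f' ◁ v)

/-- A morphism of wide right Morita contexts (f,g,η,ρ) ⟶ (f',g',η',ρ'). -/
def IsWRMCHom {B : Type*} [Bicategory B] {a b : B} {f f' : a ⟶ b} {g g' : b ⟶ a}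
    (η : f ≫ g ⟶ 𝟙 a) (ρ : g ≫ f ⟶ 𝟙 b)
    (η' : f' ≫ g' ⟶ 𝟙 a) (ρ' : g' ≫ f' ⟶ 𝟙 b)
    (u : f ⟶ f') (v : g ⟶ g') : Prop :=
  (hcomp u v ≫ η' = η) ∧ (hcomp v u ≫ ρ' = ρ)

/-- The 2-cell `η ∗ γ` of the product context. -/
def star {B : Type*} [Bicategory B] {a b c : B} {f : a ⟶ b} {g : b ⟶ a}
    {p : b ⟶ c} {q : c ⟶ b} (η : f ≫ g ⟶ 𝟙 a) (γ : p ≫ q ⟶ 𝟙 b) :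
    (f ≫ p) ≫ (q ≫ g) ⟶ 𝟙 a :=
  (α_ f p (q ≫ g)).hom ≫ (f ◁ (α_ p q g).inv) ≫ (f ◁ (γ ▷ g)) ≫
    (f ◁ (λ_ g).hom) ≫ η

theorem wideMorita_stmt7 {B : Type*} [Bicategory B] {a b c d : B}
    {f : a ⟶ b} {g : b ⟶ a} {p : b ⟶ c} {q : c ⟶ b} {u : c ⟶ d} {v : d ⟶ c}
    (η : f ≫ g ⟶ 𝟙 a) (ρ : g ≫ f ⟶ 𝟙 b)
    (γ : p ≫ q ⟶ 𝟙 b) (μ : q ≫ p ⟶ 𝟙 c)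
    (θ : u ≫ v ⟶ 𝟙 c) (σ : v ≫ u ⟶ 𝟙 d)
    (hΓ : IsWRMC f g η ρ) (hΛ : IsWRMC p q γ μ) (hΩ : IsWRMC u v θ σ) :
    IsWRMCHom (star (star η γ) θ) (star σ (star μ ρ))
      (star η (star γ θ)) (star (star σ μ) ρ)
      (α_ f p u).hom (α_ v q g).inv ∧
    IsIso (α_ f p u).hom ∧ IsIso (α_ v q g).inv := by
  refine ⟨⟨?_, ?_⟩, inferInstance, inferInstance⟩ <;>
  · simp only [IsWRMCHom, hcomp, _root_.star]
    bicategory
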